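/- arXiv:1612.07552 — 2 statements merged into one kernel-verified Lean document; each statement's English description precedes it below -/
import Mathlib

section
/- Let G be a finite simple connected graph with vertex set V, let V_c be a nonempty proper subset of V, and let g : V_c → [0,1] be an incomplete V_c-greyscale of G such that both values 0 and 1 are attained by g. Then there exists a greyscale f of G compatible with g whose gradation vector is lexicographically minimal among the gradation vectors of all greyscales of G compatible with g, and this greyscale f is unique. -/
open SimpleGraph

/-- A greyscale of a graph on vertex set `V`: a map to `[0,1]` attaining both `0` and `1`. -/
def IsGreyscale {V : Type*} (f : V → ℝ) : Prop :=
  (∀ w, 0 ≤ f w ∧ f w ≤ 1) ∧ (∃ a, f a = 0) ∧ (∃ b, f b = 1)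

/-- The grey tone of an edge: the absolute difference of the tones of its endpoints. -/
noncomputable def greyTone {V : Type*} (f : V → ℝ) : Sym2 V → ℝ :=
  Sym2.lift ⟨fun a b => |f a - f b|, fun _ _ => abs_sub_comm _ _⟩

/-- The edge-colour-increase mapping `F(u,v) = |f u - f v| / d(u,v)` (and `0` on the diagonal). -/
noncomputable def ecim {V : Type*} (G : SimpleGraph V) (f : V → ℝ) (u v : V) : ℝ :=
  letI := Classical.dec (u = v)
  if u = v then 0 else |f u - f v| / (G.dist u v : ℝ)

/-- The support greyscale for antipodal vertices `u, v` of a graph of diameter `D`. -/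
noncomputable def supportGreyscale {V : Type*} (G : SimpleGraph V) (u v : V) (D : ℕ)
    (w : V) : ℝ :=
  ((G.dist w u : ℝ) - (G.dist w v : ℝ) + (D : ℝ)) / (2 * (D : ℝ))

/-- The gradation vector: the grey tones of all edges, sorted in decreasing order. -/
noncomputable def gradVec {V : Type*} [Fintype V] (G : SimpleGraph V) (f : V → ℝ) : List ℝ :=
  letI := Classical.decEq V
  letI : DecidableRel G.Adj := Classical.decRel _
  (G.edgeFinset.val.map (greyTone f)).sort (· ≥ ·)

/-- Lexicographic comparison of gradation vectors: `f` is smaller than or equal to `g`. -/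
def GradLE {V : Type*} [Fintype V] (G : SimpleGraph V) (f g : V → ℝ) : Prop :=
  gradVec G f = gradVec G g ∨ List.Lex (· < ·) (gradVec G f) (gradVec G g)

/-- A minimum gradation greyscale: a greyscale whose gradation vector is lexicographically
minimal among the gradation vectors of all greyscales. -/
def IsMinGradGreyscale {V : Type*} [Fintype V] (G : SimpleGraph V) (f : V → ℝ) : Prop :=
  IsGreyscale f ∧ ∀ g : V → ℝ, IsGreyscale g → GradLE G f g


namespace GreyAux

/-- Lex is asymmetric. -/
lemma lex_asymm : ∀ {a b : List ℝ}, List.Lex (· < ·) a b → List.Lex (· < ·) b a → False := by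
  intro a b h1 h2
  induction h1 with
  | nil => exact List.not_lex_nil h2
  | @rel x l y m hxy =>
      cases h2 with
      | rel h => exact absurd hxy (not_lt_of_gt h)
      | cons h => exact absurd hxy (lt_irrefl _)
  | @cons x l m h ih =>
      cases h2 with
      | rel h => exact absurd h (lt_irrefl _)
      | cons h => exact ih h

/-- first-difference comparison gives eq or lex. -/
lemma eq_or_lex_of_getD (a b : List ℝ) (hlen : a.length = b.length)
    (H : ∀ k < a.length, (∀ j < k, a.getD j 0 = b.getD j 0) → a.getD k 0 ≤ b.getD k 0) :
    a = b ∨ List.Lex (· < ·) a b := by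
  induction a generalizing b with
  | nil => cases b with
    | nil => exact Or.inl rfl
    | cons y bs => simp at hlen
  | cons x as ih =>
      cases b with
      | nil => simp at hlen
      | cons y bs =>
          have hxy : x ≤ y := by
            have := H 0 (by simp) (by intro j hj; omega)
            simpa using this
          rcases lt_or_eq_of_le hxy with h | h
          · exact Or.inr (List.Lex.rel h)
          · subst h
            have hlen' : as.length = bs.length := by simpa using hlen
            have H' : ∀ k < as.length, (∀ j < k, as.getD j 0 = bs.getD j 0) →
                as.getD k 0 ≤ bs.getD k 0 := by
              intro k hk hagree
              have := H (k+1) (by simpa using Nat.succ_lt_succ hk) ?_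
              · simpa using this
              · intro j hj
                cases j with
                | zero => simp
                | succ j => simpa using hagree j (by omega)
            rcases ih bs hlen' H' with h | h
            · exact Or.inl (by rw [h])
            · exact Or.inr (List.Lex.cons h)

/-- prefix-sum domination gives eq or lex. -/
lemma eq_or_lex_of_take_sum (a b : List ℝ) (hlen : a.length = b.length)
    (H : ∀ k, (a.take k).sum ≤ (b.take k).sum) :
    a = b ∨ List.Lex (· < ·) a b := by
  induction a generalizing b with
  | nil => cases b with
    | nil => exact Or.inl rfl
    | cons y bs => simp at hlen
  | cons x as ih =>
      cases b with
      | nil => simp at hlen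
      | cons y bs =>
          have hxy : x ≤ y := by simpa using H 1
          rcases lt_or_eq_of_le hxy with h | h
          · exact Or.inr (List.Lex.rel h)
          · subst h
            have hlen' : as.length = bs.length := by simpa using hlen
            have H' : ∀ k, (as.take k).sum ≤ (bs.take k).sum := by
              intro k
              have := H (k+1)
              simp only [List.take_succ_cons, List.sum_cons] at this
              linarith
            rcases ih bs hlen' H' with h | h
            · exact Or.inl (by rw [h])
            · exact Or.inr (List.Lex.cons h)

/-- cons-peeling for subperm of sorted-descending lists. -/
lemma subperm_tail_of_sorted {a b : ℝ} {u l : List ℝ}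
    (hu : (a :: u).Pairwise (· ≥ ·)) (hl : (b :: l).Pairwise (· ≥ ·))
    (h : (a :: u).Subperm (b :: l)) : u.Subperm l := by
  have hab : a ≤ b := by
    have ha : a ∈ b :: l := h.subset (by simp)
    rcases List.mem_cons.1 ha with h' | h'
    · exact le_of_eq h'
    · exact (List.rel_of_pairwise_cons hl h')
  rcases eq_or_lt_of_le hab with heq | hlt
  · subst heq
    exact (List.subperm_cons a).1 h
  · -- a < b, so b ∉ a :: u
    rw [List.subperm_ext_iff] at h ⊢
    intro x hx
    have hx' : x ∈ a :: u := List.mem_cons_of_mem a hx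
    have hcount := h x hx'
    have hxa : x ≤ a := List.rel_of_pairwise_cons hu hx
    have hxb : x ≠ b := fun hxb => absurd (hxb ▸ hxa) (not_le_of_gt hlt)
    calc List.count x u ≤ List.count x (a :: u) := by
          rw [List.count_cons]; omega
      _ ≤ List.count x (b :: l) := hcount
      _ = List.count x l := by
          rw [List.count_cons]
          simp [Ne.symm hxb]

/-- sum of a sorted sublist is at most sum of the corresponding prefix. -/
lemma sum_le_take_sum_of_subperm : ∀ (l u : List ℝ), u.Pairwise (· ≥ ·) → l.Pairwise (· ≥ ·) →
    u.Subperm l → u.sum ≤ (l.take u.length).sum := by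
  intro l
  induction l with
  | nil => intro u _ _ h; have := h.length_le; simp at this; simp [this]
  | cons b l ih =>
      intro u hu hl h
      cases u with
      | nil => simp
      | cons a u' =>
          have hab : a ≤ b := by
            have ha : a ∈ b :: l := h.subset (by simp)
            rcases List.mem_cons.1 ha with h' | h'
            · exact le_of_eq h'
            · exact (List.rel_of_pairwise_cons hl h')
          have htail := subperm_tail_of_sorted hu hl h
          have := ih u' hu.of_cons hl.of_cons htail
          simp only [List.length_cons, List.take_succ_cons, List.sum_cons]
          linarith




/-- sort a multiset of reals in decreasing order. -/
noncomputable def sortD (s : Multiset ℝ) : List ℝ := s.sort (· ≥ ·)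

/-- sum of the `k` largest elements. -/
noncomputable def topk (s : Multiset ℝ) (k : ℕ) : ℝ := ((sortD s).take k).sum

/-- the `k`-th largest element (0-indexed), default 0. -/
noncomputable def kth (s : Multiset ℝ) (k : ℕ) : ℝ := (sortD s).getD k 0

lemma sortD_sorted (s : Multiset ℝ) : (sortD s).Pairwise (· ≥ ·) := Multiset.pairwise_sort s _

lemma sortD_coe (s : Multiset ℝ) : (sortD s : Multiset ℝ) = s := Multiset.sort_eq s _

lemma sortD_length (s : Multiset ℝ) : (sortD s).length = Multiset.card s :=
  Multiset.length_sort _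

lemma sortD_sum (s : Multiset ℝ) : (sortD s).sum = s.sum := by
  rw [← Multiset.sum_coe, sortD_coe]

/-- there is an enumeration of `M` sorted descending by `x`. -/
lemma exists_sorted_enum {α : Type*} (x : α → ℝ) (M : Multiset α) :
    ∃ l : List α, (l : Multiset α) = M ∧ (l.map x).Pairwise (· ≥ ·) := by
  classical
  induction M using Multiset.induction_on with
  | empty => exact ⟨[], by simp, by simp⟩
  | cons a s ih =>
      obtain ⟨l, hl, hsort⟩ := ih
      set r : α → α → Prop := fun p q => x p ≥ x q with hr
      letI : DecidableRel r := fun a b => Real.decidableLE _ _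
      haveI hTot : IsTotal α r := ⟨fun a b => le_total (x b) (x a)⟩
      haveI hTrans : IsTrans α r := ⟨fun a b c h h' => le_trans h' h⟩
      refine ⟨List.orderedInsert r a l, ?_, ?_⟩
      · have hco : (List.orderedInsert r a l : Multiset α) = ((a :: l : List α) : Multiset α) :=
          Multiset.coe_eq_coe.2 (List.perm_orderedInsert r a l)
        rw [hco, ← hl]
        rfl
      · have hsl : l.Pairwise r := by
          have := hsort
          rw [List.pairwise_map] at this
          exact this
        have h2 := List.Pairwise.orderedInsert (r := r) a l hsl
        rw [List.pairwise_map]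
        exact h2

lemma sortD_map_eq {α : Type*} {x : α → ℝ} {M : Multiset α} {l : List α}
    (hl : (l : Multiset α) = M) (hs : (l.map x).Pairwise (· ≥ ·)) :
    sortD (M.map x) = l.map x := by
  apply List.Perm.eq_of_pairwise' (r := (· ≥ ·)) (sortD_sorted _) hs
  rw [← Multiset.coe_eq_coe, sortD_coe, ← hl, Multiset.map_coe]

/-- any k-element sub-multiset has sum at most the top-k sum. -/
lemma sum_le_topk {t s : Multiset ℝ} (h : t ≤ s) : t.sum ≤ topk s (Multiset.card t) := by
  have hsub : (sortD t).Subperm (sortD s) := by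
    rw [← Multiset.coe_le, sortD_coe, sortD_coe]; exact h
  have := sum_le_take_sum_of_subperm (sortD s) (sortD t) (sortD_sorted t) (sortD_sorted s) hsub
  rwa [sortD_sum, sortD_length] at this

/-- the top-k sum is attained by a k-element sub-multiset of the index multiset. -/
lemma exists_topk_attained {α : Type*} (x : α → ℝ) (M : Multiset α) (k : ℕ)
    (hk : k ≤ Multiset.card M) :
    ∃ u : Multiset α, u ≤ M ∧ Multiset.card u = k ∧ (u.map x).sum = topk (M.map x) k := by
  obtain ⟨l, hl, hsort⟩ := exists_sorted_enum x M
  refine ⟨(l.take k : List α), ?_, ?_, ?_⟩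
  · rw [← hl, Multiset.coe_le]; exact (List.take_sublist k l).subperm
  · have : l.length = Multiset.card M := by rw [← hl]; simp
    simp [List.length_take, this, hk]
  · rw [topk, sortD_map_eq hl hsort, ← List.map_take, Multiset.map_coe, Multiset.sum_coe]

/-- averaging bound for top-k sums. -/
lemma topk_avg_le {α : Type*} (x y z : α → ℝ) (M : Multiset α)
    (h : ∀ e ∈ M, 2 * x e ≤ y e + z e) (k : ℕ) (hk : k ≤ Multiset.card M) :
    2 * topk (M.map x) k ≤ topk (M.map y) k + topk (M.map z) k := by
  obtain ⟨u, hu, hcard, hsum⟩ := exists_topk_attained x M k hk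
  have h2 : (u.map (fun e => 2 * x e)).sum ≤ (u.map (fun e => y e + z e)).sum :=
    Multiset.sum_map_le_sum_map _ _ (fun e he => h e (Multiset.mem_of_le hu he))
  have hy : (u.map y).sum ≤ topk (M.map y) k := by
    have := sum_le_topk (Multiset.map_le_map hu (f := y))
    rwa [Multiset.card_map, hcard] at this
  have hz : (u.map z).sum ≤ topk (M.map z) k := by
    have := sum_le_topk (Multiset.map_le_map hu (f := z))
    rwa [Multiset.card_map, hcard] at this
  have e1 : (u.map (fun e => 2 * x e)).sum = 2 * (u.map x).sum := by
    simp [Multiset.sum_map_mul_left]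
  have e2 : (u.map (fun e => y e + z e)).sum = (u.map y).sum + (u.map z).sum := by
    rw [← Multiset.sum_map_add]
  rw [e1, e2] at h2
  rw [← hsum]
  linarith

lemma countP_le_of_sorted : ∀ (L : List ℝ) (k : ℕ) (c : ℝ), L.Pairwise (· ≥ ·) →
    ∀ (hk : k < L.length), ¬ c < L[k] →
    L.countP (fun v => decide (c < v)) ≤ k := by
  intro L
  induction L with
  | nil => intro k c _ hk; simp at hk
  | cons a tail ih =>
      intro k c hs hk hc
      cases k with
      | zero =>
          have ha : ¬ c < a := by simpa using hc
          have hall : ∀ v ∈ a :: tail, ¬ (decide (c < v)) = true := by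
            intro v hv
            rcases List.mem_cons.1 hv with h | h
            · simpa [h] using ha
            · have : v ≤ a := List.rel_of_pairwise_cons hs h
              simp only [decide_eq_true_eq]
              intro hcv
              exact ha (lt_of_lt_of_le hcv this)
          simp [List.countP_eq_zero.2 hall]
      | succ k =>
          rw [List.countP_cons]
          have hk' : k < tail.length := by simpa using hk
          have hc' : ¬ c < tail[k] := by simpa using hc
          have := ih k c hs.of_cons hk' hc'
          split <;> omega

/-- upper witnesses: a (k+1)-subset on which x is at least the k-th value. -/
lemma exists_top_submultiset {α : Type*} (x : α → ℝ) (M : Multiset α) (k : ℕ)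
    (hk : k < Multiset.card M) :
    ∃ u : Multiset α, u ≤ M ∧ Multiset.card u = k + 1 ∧
      ∀ e ∈ u, kth (M.map x) k ≤ x e := by
  obtain ⟨l, hl, hsort⟩ := exists_sorted_enum x M
  have hlen : l.length = Multiset.card M := by rw [← hl]; simp
  have hkl : k < l.length := by omega
  have hkth : kth (M.map x) k = x l[k] := by
    rw [kth, sortD_map_eq hl hsort,
      List.getD_eq_getElem _ _ (by simpa using hkl), List.getElem_map]
  refine ⟨(l.take (k+1) : List α), ?_, ?_, ?_⟩
  · rw [← hl, Multiset.coe_le]; exact (List.take_sublist _ l).subperm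
  · simp [List.length_take]; omega
  · intro e he
    have he' : e ∈ l.take (k+1) := by
      have : e ∈ ((l.take (k+1) : List α) : Multiset α) := he
      simpa using this
    obtain ⟨i, him, hie⟩ := List.mem_take_iff_getElem.1 he'
    have hik : i ≤ k := by omega
    have hil : i < l.length := by omega
    rw [hkth, ← hie]
    rcases eq_or_lt_of_le hik with h | h
    · subst h; exact le_refl _
    · have hp := List.pairwise_iff_get.1 hsort ⟨i, by simpa using hil⟩ ⟨k, by simpa using hkl⟩
        (by simpa using h)
      simpa using hp

/-- any (k+1)-subset contains an element with x-value at most the k-th value. -/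
lemma exists_le_kth {α : Type*} (x : α → ℝ) (M : Multiset α) (k : ℕ)
    (hk : k < Multiset.card M) (u : Multiset α) (hu : u ≤ M)
    (hcard : Multiset.card u = k + 1) :
    ∃ e ∈ u, x e ≤ kth (M.map x) k := by
  by_contra hcon
  push_neg at hcon
  set c := kth (M.map x) k with hc
  obtain ⟨l, hl, hsort⟩ := exists_sorted_enum x M
  have hlen : l.length = Multiset.card M := by rw [← hl]; simp
  have hkl : k < (l.map x).length := by simpa using (by omega : k < l.length)
  have hkth : c = (l.map x)[k] := by
    rw [hc, kth, sortD_map_eq hl hsort, List.getD_eq_getElem _ _ hkl]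
  classical
  have h1 : Multiset.countP (fun v => c < v) (u.map x) = k + 1 := by
    rw [Multiset.countP_eq_card.2 ?_, Multiset.card_map, hcard]
    intro v hv
    obtain ⟨e, he, rfl⟩ := Multiset.mem_map.1 hv
    exact hcon e he
  have h2 : Multiset.countP (fun v => c < v) (u.map x) ≤
      Multiset.countP (fun v => c < v) (M.map x) :=
    Multiset.countP_le_of_le _ (Multiset.map_le_map hu)
  have h3 : Multiset.countP (fun v => c < v) (M.map x) ≤ k := by
    have hMx : M.map x = ((l.map x : List ℝ) : Multiset ℝ) := by
      rw [← hl, Multiset.map_coe]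
    rw [hMx, Multiset.coe_countP]
    exact countP_le_of_sorted (l.map x) k c hsort hkl (by rw [← hkth]; exact lt_irrefl c |> fun h => h)
  omega

lemma kth_mono {α : Type*} (x y : α → ℝ) (M : Multiset α)
    (h : ∀ e ∈ M, x e ≤ y e) (k : ℕ) :
    kth (M.map x) k ≤ kth (M.map y) k := by
  rcases lt_or_ge k (Multiset.card M) with hk | hk
  · obtain ⟨u, hu, hcard, hx⟩ := exists_top_submultiset x M k hk
    obtain ⟨e, he, hy⟩ := exists_le_kth y M k hk u hu hcard
    exact le_trans (hx e he) (le_trans (h e (Multiset.mem_of_le hu he)) hy)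
  · have h1 : kth (M.map x) k = 0 := by
      rw [kth]; exact List.getD_eq_default _ _ (by rw [sortD_length]; simpa using hk)
    have h2 : kth (M.map y) k = 0 := by
      rw [kth]; exact List.getD_eq_default _ _ (by rw [sortD_length]; simpa using hk)
    rw [h1, h2]

lemma kth_add_const {α : Type*} (x : α → ℝ) (c : ℝ) (M : Multiset α) (k : ℕ)
    (hk : k < Multiset.card M) :
    kth (M.map (fun e => x e + c)) k = kth (M.map x) k + c := by
  obtain ⟨l, hl, hsort⟩ := exists_sorted_enum x M
  have hsort' : (l.map (fun e => x e + c)).Pairwise (· ≥ ·) := by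
    have heq : l.map (fun e => x e + c) = (l.map x).map (· + c) := by simp
    rw [heq, List.pairwise_map]
    exact hsort.imp (fun hab => add_le_add_left hab c)
  have hlen : l.length = Multiset.card M := by rw [← hl]; simp
  have hkl : k < l.length := by omega
  rw [kth, kth, sortD_map_eq hl hsort, sortD_map_eq hl hsort',
    List.getD_eq_getElem _ _ (by simpa using hkl), List.getD_eq_getElem _ _ (by simpa using hkl),
    List.getElem_map, List.getElem_map]

/-- pointwise equality from sum equality under pointwise inequality. -/
lemma eq_of_sum_map_eq {α : Type*} (M : Multiset α) (f g : α → ℝ)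
    (hle : ∀ e ∈ M, f e ≤ g e) (hsum : (M.map f).sum = (M.map g).sum) :
    ∀ e ∈ M, f e = g e := by
  induction M using Multiset.induction_on with
  | empty => intro e he; simp at he
  | cons a s ih =>
      have hfa : f a ≤ g a := hle a (Multiset.mem_cons_self a s)
      have hres : (s.map f).sum ≤ (s.map g).sum :=
        Multiset.sum_map_le_sum_map _ _ (fun e he => hle e (Multiset.mem_cons_of_mem he))
      simp only [Multiset.map_cons, Multiset.sum_cons] at hsum
      have h1 : f a = g a := by linarith
      have h2 : (s.map f).sum = (s.map g).sum := by linarith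
      intro e he
      rcases Multiset.mem_cons.1 he with rfl | he'
      · exact h1
      · exact ih (fun e he => hle e (Multiset.mem_cons_of_mem he)) h2 e he'

end GreyAux
open SimpleGraph in
/-- the multiset of edges, with the same instances as `gradVec`. -/
noncomputable def edgeM {V : Type*} [Fintype V] (G : SimpleGraph V) : Multiset (Sym2 V) :=
  letI := Classical.decEq V
  letI : DecidableRel G.Adj := Classical.decRel _
  G.edgeFinset.val

section Graph

variable {V : Type*} [Fintype V] (G : SimpleGraph V)

lemma gradVec_eq_sortD (f : V → ℝ) :
    gradVec G f = GreyAux.sortD ((edgeM G).map (greyTone f)) := rfl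

open SimpleGraph in
lemma mem_edgeM {e : Sym2 V} : e ∈ edgeM G ↔ e ∈ G.edgeSet := by
  letI := Classical.decEq V
  letI : DecidableRel G.Adj := Classical.decRel _
  rw [show edgeM G = G.edgeFinset.val from rfl, Finset.mem_val, SimpleGraph.mem_edgeFinset]

omit [Fintype V] in
lemma greyTone_mk (f : V → ℝ) (a b : V) : greyTone f s(a, b) = |f a - f b| := rfl

lemma length_gradVec (f : V → ℝ) :
    (gradVec G f).length = Multiset.card (edgeM G) := by
  rw [gradVec_eq_sortD, GreyAux.sortD_length, Multiset.card_map]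

lemma gradLE_antisymm {f h : V → ℝ} (h1 : GradLE G f h) (h2 : GradLE G h f) :
    gradVec G f = gradVec G h := by
  rcases h1 with h1 | h1
  · exact h1
  rcases h2 with h2 | h2
  · exact h2.symm
  exact absurd h2 (fun hh => GreyAux.lex_asymm h1 hh)

lemma toneM_eq_of_gradVec_eq {f h : V → ℝ} (he : gradVec G f = gradVec G h) :
    (edgeM G).map (greyTone f) = (edgeM G).map (greyTone h) := by
  rw [← GreyAux.sortD_coe ((edgeM G).map (greyTone f)),
    ← GreyAux.sortD_coe ((edgeM G).map (greyTone h)), ← gradVec_eq_sortD, ← gradVec_eq_sortD, he]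

lemma gradLE_of_topk {f h : V → ℝ}
    (H : ∀ k ≤ Multiset.card (edgeM G),
      GreyAux.topk ((edgeM G).map (greyTone f)) k ≤ GreyAux.topk ((edgeM G).map (greyTone h)) k) :
    GradLE G f h := by
  set m := Multiset.card (edgeM G) with hm
  have hlf : (gradVec G f).length = m := length_gradVec G f
  have hlh : (gradVec G h).length = m := length_gradVec G h
  refine GreyAux.eq_or_lex_of_take_sum _ _ (by rw [hlf, hlh]) ?_
  intro k
  rcases le_or_gt k m with hk | hk
  · exact H k hk
  · have h1 : (gradVec G f).take k = gradVec G f := List.take_of_length_le (by omega)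
    have h2 : (gradVec G h).take k = gradVec G h := List.take_of_length_le (by omega)
    rw [h1, h2]
    have := H m le_rfl
    rw [GreyAux.topk, GreyAux.topk, ← gradVec_eq_sortD, ← gradVec_eq_sortD,
      List.take_of_length_le (le_of_eq hlf), List.take_of_length_le (le_of_eq hlh)] at this
    exact this

end Graph


theorem stmt_16 {V : Type*} [Fintype V] (G : SimpleGraph V) (hG : G.Connected)
    (Vc : Set V) (hne : Vc.Nonempty) (hproper : Vc ≠ Set.univ)
    (g : Vc → ℝ) (hg : ∀ u : Vc, 0 ≤ g u ∧ g u ≤ 1)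
    (h0 : ∃ a : Vc, g a = 0) (h1 : ∃ b : Vc, g b = 1) :
    ∃! f : V → ℝ, IsGreyscale f ∧ (∀ u : Vc, f u = g u) ∧
      ∀ h : V → ℝ, IsGreyscale h → (∀ u : Vc, h u = g u) → GradLE G f h := by
  classical
  obtain ⟨a₀, ha₀⟩ := h0
  obtain ⟨b₀, hb₀⟩ := h1
  set S : Set (V → ℝ) := {f | IsGreyscale f ∧ ∀ u : Vc, f u = g u} with hSdef
  -- S is nonempty
  have hSne : S.Nonempty := by
    refine ⟨fun v => if h : v ∈ Vc then g ⟨v, h⟩ else 0, ⟨⟨?_, ⟨a₀, ?_⟩, ⟨b₀, ?_⟩⟩, ?_⟩⟩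
    · intro w
      dsimp only
      split
      · exact hg _
      · norm_num
    · dsimp only
      rw [dif_pos a₀.2, Subtype.coe_eta]
      exact ha₀
    · dsimp only
      rw [dif_pos b₀.2, Subtype.coe_eta]
      exact hb₀
    · intro u
      dsimp only
      rw [dif_pos u.2, Subtype.coe_eta]
  -- S is compact
  have hSsub : S ⊆ Set.pi Set.univ (fun _ : V => Set.Icc (0:ℝ) 1) := by
    intro f hf
    rw [Set.mem_univ_pi]
    intro w
    exact ⟨(hf.1.1 w).1, (hf.1.1 w).2⟩
  have hSclosed : IsClosed S := by
    have h1 : IsClosed {f : V → ℝ | ∀ w, 0 ≤ f w ∧ f w ≤ 1} := by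
      have : {f : V → ℝ | ∀ w, 0 ≤ f w ∧ f w ≤ 1} =
          ⋂ (w : V), ({f : V → ℝ | 0 ≤ f w} ∩ {f | f w ≤ 1}) := by
        ext f; simp [Set.mem_iInter, forall_and]
      rw [this]
      exact isClosed_iInter fun w =>
        (isClosed_le continuous_const (continuous_apply w)).inter
          (isClosed_le (continuous_apply w) continuous_const)
    have h2 : IsClosed {f : V → ℝ | ∃ a, f a = 0} := by
      have : {f : V → ℝ | ∃ a, f a = 0} = ⋃ (a : V), {f : V → ℝ | f a = 0} := by
        ext f; simp
      rw [this]
      exact isClosed_iUnion_of_finite fun a =>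
        isClosed_eq (continuous_apply a) continuous_const
    have h3 : IsClosed {f : V → ℝ | ∃ b, f b = 1} := by
      have : {f : V → ℝ | ∃ b, f b = 1} = ⋃ (b : V), {f : V → ℝ | f b = 1} := by
        ext f; simp
      rw [this]
      exact isClosed_iUnion_of_finite fun b =>
        isClosed_eq (continuous_apply b) continuous_const
    have h4 : IsClosed {f : V → ℝ | ∀ u : Vc, f u = g u} := by
      have : {f : V → ℝ | ∀ u : Vc, f u = g u} = ⋂ (u : Vc), {f : V → ℝ | f u = g u} := by
        ext f; simp [Set.mem_iInter]
      rw [this]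
      exact isClosed_iInter fun u =>
        isClosed_eq (continuous_apply _) continuous_const
    have : S = ({f : V → ℝ | ∀ w, 0 ≤ f w ∧ f w ≤ 1} ∩ {f | ∃ a, f a = 0} ∩ {f | ∃ b, f b = 1})
        ∩ {f | ∀ u : Vc, f u = g u} := by
      ext f
      constructor
      · rintro ⟨⟨hb, hz, ho⟩, hc⟩
        exact ⟨⟨⟨hb, hz⟩, ho⟩, hc⟩
      · rintro ⟨⟨⟨hb, hz⟩, ho⟩, hc⟩
        exact ⟨⟨hb, hz, ho⟩, hc⟩
    rw [this]
    exact ((h1.inter h2).inter h3).inter h4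
  have hScompact : IsCompact S :=
    IsCompact.of_isClosed_subset (isCompact_univ_pi fun _ => isCompact_Icc) hSclosed hSsub
  -- coordinate functions of the gradation vector
  set m : ℕ := Multiset.card (edgeM G) with hmdef
  set Φ : ℕ → (V → ℝ) → ℝ :=
    fun k f => GreyAux.kth ((edgeM G).map (greyTone f)) k with hΦdef
  have hΦgetD : ∀ k (f : V → ℝ), Φ k f = (gradVec G f).getD k 0 := fun _ _ => rfl
  -- Lipschitz bound for Φ
  have htone_bound : ∀ (f h : V → ℝ) (e : Sym2 V),
      greyTone f e ≤ greyTone h e + 2 * dist f h := by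
    intro f h e
    induction e using Sym2.ind with
    | _ u v =>
      rw [greyTone_mk, greyTone_mk]
      have h1 : |f u - h u| ≤ dist f h := by
        rw [← Real.dist_eq]; exact dist_le_pi_dist f h u
      have h2 : |f v - h v| ≤ dist f h := by
        rw [← Real.dist_eq]; exact dist_le_pi_dist f h v
      have h3 : |f u - f v| - |h u - h v| ≤ |(f u - f v) - (h u - h v)| :=
        abs_sub_abs_le_abs_sub _ _
      have h4 : |(f u - f v) - (h u - h v)| ≤ |f u - h u| + |f v - h v| := by
        have : (f u - f v) - (h u - h v) = (f u - h u) - (f v - h v) := by ring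
        rw [this]
        exact abs_sub _ _
      linarith
  have hΦlip : ∀ k (f h : V → ℝ), Φ k f ≤ Φ k h + 2 * dist f h := by
    intro k f h
    rcases lt_or_ge k m with hk | hk
    · have hmono : Φ k f ≤ GreyAux.kth ((edgeM G).map (fun e => greyTone h e + 2 * dist f h)) k :=
        GreyAux.kth_mono _ _ _ (fun e _ => htone_bound f h e) k
      have hshift := GreyAux.kth_add_const (greyTone h) (2 * dist f h) (edgeM G) k (by omega)
      rw [hshift] at hmono
      exact hmono
    · have h1 : Φ k f = 0 := by
        rw [hΦdef]
        exact List.getD_eq_default _ _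
          (by rw [GreyAux.sortD_length, Multiset.card_map]; omega)
      have h2 : Φ k h = 0 := by
        rw [hΦdef]
        exact List.getD_eq_default _ _
          (by rw [GreyAux.sortD_length, Multiset.card_map]; omega)
      rw [h1, h2]
      positivity
  have hΦcont : ∀ k, Continuous (Φ k) := by
    intro k
    have : LipschitzWith 2 (Φ k) := by
      apply LipschitzWith.of_dist_le_mul
      intro f h
      rw [Real.dist_eq, abs_sub_le_iff]
      constructor
      · have := hΦlip k f h
        have hd : dist f h = dist h f := dist_comm f h
        push_cast
        linarith
      · have := hΦlip k h f
        have hd : dist f h = dist h f := dist_comm f h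
        push_cast
        linarith
    exact this.continuous
  -- the minimizing chain
  let C : ℕ → Set (V → ℝ) :=
    fun n => Nat.rec S (fun k Ck => {f | f ∈ Ck ∧ ∀ h' ∈ Ck, Φ k f ≤ Φ k h'}) n
  have hC0 : C 0 = S := rfl
  have hCs : ∀ k, C (k + 1) = {f | f ∈ C k ∧ ∀ h' ∈ C k, Φ k f ≤ Φ k h'} := fun _ => rfl
  have hCprop : ∀ k, IsCompact (C k) ∧ (C k).Nonempty := by
    intro k
    induction k with
    | zero => exact ⟨hScompact, hSne⟩
    | succ k ih =>
        obtain ⟨hcomp, hne'⟩ := ih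
        have hclosed' : IsClosed (C (k + 1)) := by
          rw [hCs]
          have heq : {f | f ∈ C k ∧ ∀ h' ∈ C k, Φ k f ≤ Φ k h'} =
              C k ∩ ⋂ h' ∈ C k, {f | Φ k f ≤ Φ k h'} := by
            ext f
            simp [Set.mem_iInter]
          rw [heq]
          exact hcomp.isClosed.inter
            (isClosed_biInter fun h' _ => isClosed_le (hΦcont k) continuous_const)
        constructor
        · exact hcomp.of_isClosed_subset hclosed' (by rw [hCs]; exact fun f hf => hf.1)
        · obtain ⟨f, hfC, hfmin⟩ := hcomp.exists_isMinOn hne' ((hΦcont k).continuousOn)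
          exact ⟨f, by rw [hCs]; exact ⟨hfC, fun h' hh' => hfmin hh'⟩⟩
  have hCmono : ∀ j k, j ≤ k → C k ⊆ C j := by
    intro j k hjk
    induction hjk with
    | refl => exact fun f hf => hf
    | step h ih => exact fun f hf => ih ((by rw [hCs] at hf; exact hf.1))
  have hCS : ∀ k, C k ⊆ S := fun k => hCmono 0 k (Nat.zero_le k)
  obtain ⟨fstar, hfstar⟩ := (hCprop m).2
  have hfS : fstar ∈ S := hCS m hfstar
  -- minimality of fstar
  have hmin : ∀ h' ∈ S, GradLE G fstar h' := by
    intro h' hh'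
    have hmem : ∀ k, k ≤ m →
        (∀ j < k, (gradVec G fstar).getD j 0 = (gradVec G h').getD j 0) → h' ∈ C k := by
      intro k
      induction k with
      | zero => intro _ _; exact hh'
      | succ k ih =>
          intro hk hagree
          have hh'k : h' ∈ C k := ih (by omega) (fun j hj => hagree j (by omega))
          rw [hCs]
          refine ⟨hh'k, ?_⟩
          intro h'' hh''
          have h1 : Φ k h' = Φ k fstar := by
            rw [hΦgetD, hΦgetD, ← hagree k (by omega)]
          have hfk : fstar ∈ C (k + 1) := hCmono (k + 1) m hk hfstar
          rw [hCs] at hfk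
          rw [h1]
          exact hfk.2 h'' hh''
    have hlen : (gradVec G fstar).length = (gradVec G h').length := by
      rw [length_gradVec, length_gradVec]
    refine GreyAux.eq_or_lex_of_getD _ _ hlen ?_
    intro k hk hagree
    have hkm : k < m := by rwa [length_gradVec] at hk
    have hh'k : h' ∈ C k := hmem k (le_of_lt hkm) hagree
    have hfk : fstar ∈ C (k + 1) := hCmono (k + 1) m hkm hfstar
    rw [hCs] at hfk
    have := hfk.2 h' hh'k
    rwa [hΦgetD, hΦgetD] at this
  refine ⟨fstar, ⟨hfS.1, hfS.2, fun h' hgrey hcompat => hmin h' ⟨hgrey, hcompat⟩⟩, ?_⟩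
  -- uniqueness
  rintro f' ⟨hf'grey, hf'comp, hf'min⟩
  have hf'S : f' ∈ S := ⟨hf'grey, hf'comp⟩
  have hgv : gradVec G f' = gradVec G fstar :=
    gradLE_antisymm G (hf'min fstar hfS.1 hfS.2) (hmin f' hf'S)
  set p : V → ℝ := fun v => (f' v + fstar v) / 2 with hpdef
  have hpS : p ∈ S := by
    refine ⟨⟨?_, ⟨a₀, ?_⟩, ⟨b₀, ?_⟩⟩, ?_⟩
    · intro w
      have h1 := hf'grey.1 w
      have h2 := hfS.1.1 w
      constructor <;> (rw [hpdef]; dsimp only; cases h1; cases h2; linarith)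
    · rw [hpdef]
      dsimp only
      rw [hf'comp a₀, hfS.2 a₀, ha₀]
      norm_num
    · rw [hpdef]
      dsimp only
      rw [hf'comp b₀, hfS.2 b₀, hb₀]
      norm_num
    · intro u
      rw [hpdef]
      dsimp only
      rw [hf'comp u, hfS.2 u]
      ring
  have htone : ∀ e ∈ edgeM G, 2 * greyTone p e ≤ greyTone f' e + greyTone fstar e := by
    intro e _
    induction e using Sym2.ind with
    | _ u v =>
      rw [greyTone_mk, greyTone_mk, greyTone_mk]
      have hpe : p u - p v = ((f' u - f' v) + (fstar u - fstar v)) / 2 := by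
        rw [hpdef]; dsimp only; ring
      rw [hpe, abs_div, abs_two]
      have := abs_add_le (f' u - f' v) (fstar u - fstar v)
      linarith
  have htopk_eq : ∀ k, GreyAux.topk ((edgeM G).map (greyTone f')) k =
      GreyAux.topk ((edgeM G).map (greyTone fstar)) k := by
    intro k
    rw [GreyAux.topk, GreyAux.topk, ← gradVec_eq_sortD, ← gradVec_eq_sortD, hgv]
  have hgvp : gradVec G p = gradVec G fstar := by
    apply gradLE_antisymm G ?_ (hmin p hpS)
    apply gradLE_of_topk
    intro k hk
    have havg := GreyAux.topk_avg_le (greyTone p) (greyTone f') (greyTone fstar)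
      (edgeM G) htone k hk
    rw [htopk_eq k] at havg
    linarith
  have hmult1 : (edgeM G).map (greyTone p) = (edgeM G).map (greyTone fstar) :=
    toneM_eq_of_gradVec_eq G hgvp
  have hmult2 : (edgeM G).map (greyTone f') = (edgeM G).map (greyTone fstar) :=
    toneM_eq_of_gradVec_eq G hgv
  -- pointwise linear equality
  have hsum1 : ((edgeM G).map (fun e => 2 * greyTone p e)).sum =
      ((edgeM G).map (fun e => greyTone f' e + greyTone fstar e)).sum := by
    rw [Multiset.sum_map_mul_left, Multiset.sum_map_add]
    have e1 : ((edgeM G).map (greyTone p)).sum = ((edgeM G).map (greyTone fstar)).sum := by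
      rw [hmult1]
    have e2 : ((edgeM G).map (greyTone f')).sum = ((edgeM G).map (greyTone fstar)).sum := by
      rw [hmult2]
    -- goal : 2 * Σ τp = Σ τf' + Σ τfstar ... after rw?
    rw [e1, e2]  -- hopeful
    ring
  have hptwise : ∀ e ∈ edgeM G, 2 * greyTone p e = greyTone f' e + greyTone fstar e :=
    GreyAux.eq_of_sum_map_eq _ _ _ htone hsum1
  -- pointwise quadratic equality
  have hsq_le : ∀ e ∈ edgeM G, (greyTone f' e + greyTone fstar e) ^ 2 ≤
      2 * ((greyTone f' e) ^ 2 + (greyTone fstar e) ^ 2) := by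
    intro e _
    nlinarith [sq_nonneg (greyTone f' e - greyTone fstar e)]
  have hsqmap : ∀ q : V → ℝ, (edgeM G).map (fun e => (greyTone q e) ^ 2) =
      ((edgeM G).map (greyTone q)).map (fun x => x ^ 2) := by
    intro q
    rw [Multiset.map_map]
    rfl
  have hsq_sum : ((edgeM G).map (fun e => (greyTone f' e + greyTone fstar e) ^ 2)).sum =
      ((edgeM G).map (fun e => 2 * ((greyTone f' e) ^ 2 + (greyTone fstar e) ^ 2))).sum := by
    have l1 : (edgeM G).map (fun e => (greyTone f' e + greyTone fstar e) ^ 2) =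
        (edgeM G).map (fun e => 4 * (greyTone p e) ^ 2) :=
      Multiset.map_congr rfl (fun e he => by rw [← hptwise e he]; ring)
    have l2 : ((edgeM G).map (fun e => (greyTone p e) ^ 2)).sum =
        ((edgeM G).map (fun e => (greyTone fstar e) ^ 2)).sum := by
      rw [hsqmap, hsqmap, hmult1]
    have l3 : ((edgeM G).map (fun e => (greyTone f' e) ^ 2)).sum =
        ((edgeM G).map (fun e => (greyTone fstar e) ^ 2)).sum := by
      rw [hsqmap, hsqmap, hmult2]
    have r1 : (edgeM G).map (fun e => 2 * ((greyTone f' e) ^ 2 + (greyTone fstar e) ^ 2)) =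
        (edgeM G).map (fun e => 2 * (greyTone f' e) ^ 2 + 2 * (greyTone fstar e) ^ 2) :=
      Multiset.map_congr rfl (fun e _ => by ring)
    rw [l1, r1, Multiset.sum_map_add]
    have l4 : (edgeM G).map (fun e => 4 * (greyTone p e) ^ 2) =
        (edgeM G).map (fun e => (4 : ℝ) * (fun e => (greyTone p e) ^ 2) e) := rfl
    rw [l4, Multiset.sum_map_mul_left, Multiset.sum_map_mul_left, Multiset.sum_map_mul_left, l2, l3]
    ring
  have hsq_eq : ∀ e ∈ edgeM G, (greyTone f' e + greyTone fstar e) ^ 2 =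
      2 * ((greyTone f' e) ^ 2 + (greyTone fstar e) ^ 2) :=
    GreyAux.eq_of_sum_map_eq _ _ _ hsq_le hsq_sum
  have htone_eq : ∀ e ∈ edgeM G, greyTone f' e = greyTone fstar e := by
    intro e he
    have h := hsq_eq e he
    have h0 : (greyTone f' e - greyTone fstar e) ^ 2 = 0 := by linear_combination -h
    have h1 : greyTone f' e - greyTone fstar e = 0 := by
      have := (pow_eq_zero_iff (two_ne_zero)).1 h0
      exact this
    linarith
  -- equal differences on each edge
  have hdiff : ∀ u v : V, G.Adj u v → f' u - f' v = fstar u - fstar v := by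
    intro u v huv
    have he : s(u, v) ∈ edgeM G := (mem_edgeM G).2 ((SimpleGraph.mem_edgeSet G).2 huv)
    have h1 := hptwise _ he
    have h2 := htone_eq _ he
    simp only [greyTone_mk] at h1 h2
    set A := f' u - f' v with hA
    set B := fstar u - fstar v with hB
    have hpe : p u - p v = (A + B) / 2 := by
      rw [hpdef, hA, hB]; dsimp only; ring
    rw [hpe, abs_div, abs_two] at h1
    have habs : |A + B| = |A| + |B| := by linarith
    have e1 : |A + B| = 2 * |A| := by rw [habs, h2]; ring
    have e2 : (A + B) ^ 2 = 4 * A ^ 2 := by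
      rw [← sq_abs (A + B), e1, mul_pow, sq_abs]; norm_num
    have e3 : B ^ 2 = A ^ 2 := by rw [← sq_abs B, ← sq_abs A, h2]
    have e4 : (A - B) ^ 2 = 0 := by linear_combination -e2 + 2 * e3
    have := (pow_eq_zero_iff (two_ne_zero)).1 e4
    linarith
  -- propagate along walks
  have hwalk : ∀ (u v : V) (w : G.Walk u v), f' u - fstar u = f' v - fstar v := by
    intro u v w
    induction w with
    | nil => rfl
    | cons hadj _ ih =>
        have := hdiff _ _ hadj
        linarith
  funext v
  obtain ⟨w⟩ := hG.preconnected (↑a₀) v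
  have h1 := hwalk _ _ w
  have h2 : f' ↑a₀ = fstar ↑a₀ := by rw [hf'comp a₀, hfS.2 a₀]
  linarith
end

section
/- Let G be a finite simple connected graph with at least two vertices. Then there exists a minimum gradation greyscale of G; that is, there is a greyscale f of G whose gradation vector is lexicographically less than or equal to the gradation vector of every greyscale of G. -/
open SimpleGraph

/-! ### Auxiliary list lemmas -/

private lemma sorted_getD_iff : ∀ (l : List ℝ), l.Pairwise (· ≥ ·) → ∀ (i : ℕ), i < l.length →
    ∀ t : ℝ, (t ≤ l.getD i 0 ↔ i < l.countP (fun x => decide (t ≤ x))) := by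
  intro l
  induction l with
  | nil => intro _ i hi; simp at hi
  | cons a l ih =>
    intro hs i hi t
    rw [List.pairwise_cons] at hs
    cases i with
    | zero =>
      simp only [List.getD_cons_zero, List.countP_cons]
      constructor
      · intro h
        simp [h]
      · intro h
        by_contra hta
        rw [if_neg (by simpa using hta)] at h
        obtain ⟨x, hx, htx⟩ := List.countP_pos_iff.mp
          (by omega : 0 < List.countP (fun x => decide (t ≤ x)) l)
        exact hta (le_trans (by simpa using htx) (hs.1 x hx))
    | succ i =>
      have hi' : i < l.length := by simpa using hi
      have hmem : l.getD i 0 ∈ l := by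
        rw [List.getD_eq_getElem l 0 hi']; exact List.getElem_mem _
      rw [List.getD_cons_succ, List.countP_cons]
      simp only [decide_eq_true_eq]
      constructor
      · intro h
        have hta : t ≤ a := le_trans h (hs.1 _ hmem)
        have := (ih hs.2 i hi' t).mp h
        rw [if_pos hta]
        omega
      · intro h
        refine (ih hs.2 i hi' t).mpr ?_
        have : (if t ≤ a then 1 else 0) ≤ 1 := by split <;> omega
        omega

private lemma lex_of_prefix : ∀ (l1 l2 : List ℝ), l1.length = l2.length →
    (∀ i, (∀ k < i, l1.getD k 0 = l2.getD k 0) → l1.getD i 0 ≤ l2.getD i 0) →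
    l1 = l2 ∨ List.Lex (· < ·) l1 l2 := by
  intro l1
  induction l1 with
  | nil =>
    intro l2 h _
    left
    exact (List.length_eq_zero_iff.mp h.symm).symm
  | cons a l ih =>
    intro l2 hlen hyp
    cases l2 with
    | nil => simp at hlen
    | cons b l2 =>
      have hab : a ≤ b := by simpa using hyp 0 (by omega)
      rcases lt_or_eq_of_le hab with h | h
      · right; exact List.Lex.rel h
      · subst h
        rcases ih l2 (by simpa using hlen) (fun i hpre => by
          have := hyp (i + 1) (fun k hk => by
            cases k with
            | zero => simp
            | succ k => simpa using hpre k (by omega))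
          simpa using this) with h2 | h2
        · left; rw [h2]
        · right; exact List.Lex.cons h2

/-! ### Components of the gradation vector -/

/-- The `i`-th component of the gradation vector. -/
noncomputable def vi {V : Type*} [Fintype V] (G : SimpleGraph V) (i : ℕ) (f : V → ℝ) : ℝ :=
  (gradVec G f).getD i 0

section Aux

variable {V : Type*} [Fintype V]

private lemma gradVec_sorted (G : SimpleGraph V) (f : V → ℝ) :
    (gradVec G f).Pairwise (· ≥ ·) :=
  Multiset.pairwise_sort _ _

private lemma gradVec_length (G : SimpleGraph V) (f g : V → ℝ) :
    (gradVec G f).length = (gradVec G g).length := by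
  simp [gradVec, Multiset.length_sort]

private lemma gradVec_countP (G : SimpleGraph V) (f : V → ℝ) (t : ℝ) :
    (gradVec G f).countP (fun x => decide (t ≤ x)) =
      letI := Classical.decEq V
      letI : DecidableRel G.Adj := Classical.decRel _
      Multiset.countP (fun e => t ≤ greyTone f e) G.edgeFinset.val := by
  classical
  rw [gradVec]
  rw [← Multiset.coe_countP, Multiset.sort_eq, Multiset.countP_map,
    Multiset.countP_eq_card_filter]

private lemma greyTone_dist (f g : V → ℝ) (e : Sym2 V) :
    |greyTone f e - greyTone g e| ≤ 2 * dist f g := by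
  induction e using Sym2.ind with
  | _ a b =>
    simp only [greyTone, Sym2.lift_mk]
    calc abs (abs (f a - f b) - abs (g a - g b)) ≤ abs ((f a - f b) - (g a - g b)) :=
          abs_abs_sub_abs_le_abs_sub _ _
      _ = abs ((f a - g a) - (f b - g b)) := by ring_nf
      _ ≤ abs (f a - g a) + abs (f b - g b) := abs_sub _ _
      _ ≤ dist f g + dist f g := by
          have h1 := dist_le_pi_dist f g a
          have h2 := dist_le_pi_dist f g b
          rw [Real.dist_eq] at h1 h2
          linarith
      _ = 2 * dist f g := by ring

private lemma vi_sub_le (G : SimpleGraph V) (i : ℕ) (f g : V → ℝ) :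
    vi G i f - 2 * dist f g ≤ vi G i g := by
  classical
  by_cases hi : i < (gradVec G f).length
  · have hig : i < (gradVec G g).length := by rw [← gradVec_length G f g]; exact hi
    have h1 : i < (gradVec G f).countP (fun x => decide (vi G i f ≤ x)) :=
      (sorted_getD_iff _ (gradVec_sorted G f) i hi _).mp le_rfl
    have h2 : (gradVec G f).countP (fun x => decide (vi G i f ≤ x)) ≤
        (gradVec G g).countP (fun x => decide (vi G i f - 2 * dist f g ≤ x)) := by
      rw [gradVec_countP, gradVec_countP]
      rw [Multiset.countP_eq_card_filter, Multiset.countP_eq_card_filter]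
      refine Multiset.card_le_card (Multiset.monotone_filter_right _ ?_)
      intro e he
      have hd := le_of_abs_le (greyTone_dist f g e)
      linarith
    exact (sorted_getD_iff _ (gradVec_sorted G g) i hig _).mpr (lt_of_lt_of_le h1 h2)
  · have hig : ¬ i < (gradVec G g).length := by rw [← gradVec_length G f g]; exact hi
    have e1 : (gradVec G f).getD i 0 = 0 := List.getD_eq_default _ _ (le_of_not_gt hi)
    have e2 : (gradVec G g).getD i 0 = 0 := List.getD_eq_default _ _ (le_of_not_gt hig)
    have := dist_nonneg (x := f) (y := g)
    show (gradVec G f).getD i 0 - 2 * dist f g ≤ (gradVec G g).getD i 0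
    rw [e1, e2]
    linarith

private lemma vi_continuous (G : SimpleGraph V) (i : ℕ) : Continuous (vi G i) := by
  refine LipschitzWith.continuous (K := 2) ?_
  rw [lipschitzWith_iff_dist_le_mul]
  intro f g
  rw [Real.dist_eq]
  have h1 := vi_sub_le G i f g
  have h2 := vi_sub_le G i g f
  rw [dist_comm g f] at h2
  have hc : ((2 : NNReal) : ℝ) = 2 := rfl
  rw [hc, abs_sub_le_iff]
  constructor <;> linarith

end Aux

/-- The decreasing chain of sets used for iterated lexicographic minimisation. -/
def KS {V : Type*} [Fintype V] (G : SimpleGraph V) : ℕ → Set (V → ℝ)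
  | 0 => {f | IsGreyscale f}
  | (i + 1) => {f | f ∈ KS G i ∧ ∀ g ∈ KS G i, vi G i f ≤ vi G i g}

section KSFacts

variable {V : Type*} [Fintype V]

private lemma KS_subset (G : SimpleGraph V) {i j : ℕ} (h : i ≤ j) : KS G j ⊆ KS G i := by
  induction j with
  | zero => cases Nat.le_zero.mp h; exact fun f hf => hf
  | succ j ihj =>
    rcases Nat.lt_or_ge i (j + 1) with hlt | hge
    · exact fun f hf => ihj (Nat.lt_succ_iff.mp hlt) hf.1
    · cases le_antisymm h hge; exact fun f hf => hf

private lemma KS_compact_nonempty (G : SimpleGraph V) [Nontrivial V] (i : ℕ) :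
    IsCompact (KS G i) ∧ (KS G i).Nonempty := by
  classical
  induction i with
  | zero =>
    constructor
    · have hsub : KS G 0 ⊆ Set.pi Set.univ (fun _ : V => Set.Icc (0 : ℝ) 1) := by
        intro f hf w _
        exact Set.mem_Icc.mpr (hf.1 w)
      have heq : KS G 0 = (⋂ w : V, (fun f : V → ℝ => f w) ⁻¹' Set.Icc 0 1) ∩
          ((⋃ a : V, {f : V → ℝ | f a = 0}) ∩ (⋃ b : V, {f : V → ℝ | f b = 1})) := by
        ext f
        simp [KS, IsGreyscale, Set.mem_iInter, Set.mem_iUnion, Set.mem_Icc, and_assoc]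
      have hcl : IsClosed (KS G 0) := by
        rw [heq]
        refine IsClosed.inter (isClosed_iInter fun w =>
          IsClosed.preimage (continuous_apply w) isClosed_Icc) (IsClosed.inter ?_ ?_)
        · exact isClosed_iUnion_of_finite fun a =>
            isClosed_eq (continuous_apply a) continuous_const
        · exact isClosed_iUnion_of_finite fun b =>
            isClosed_eq (continuous_apply b) continuous_const
      exact IsCompact.of_isClosed_subset (isCompact_univ_pi fun _ => isCompact_Icc) hcl hsub
    · obtain ⟨a, b, hab⟩ := exists_pair_ne V
      refine ⟨fun w => if w = b then 1 else 0, ?_, ⟨a, if_neg hab⟩, ⟨b, if_pos rfl⟩⟩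
      intro w
      by_cases hw : w = b <;> simp [hw]
  | succ i ih =>
    have heq : KS G (i + 1) = KS G i ∩ ⋂ g ∈ KS G i, {f | vi G i f ≤ vi G i g} := by
      ext f
      simp only [KS, Set.mem_inter_iff, Set.mem_iInter, Set.mem_setOf_eq]
    constructor
    · rw [heq]
      exact ih.1.inter_right (isClosed_biInter fun g _ =>
        isClosed_le (vi_continuous G i) continuous_const)
    · obtain ⟨f, hfK, hmin⟩ := ih.1.exists_isMinOn ih.2 (vi_continuous G i).continuousOn
      exact ⟨f, hfK, fun g hg => hmin hg⟩

end KSFacts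

theorem stmt_17 {V : Type*} [Fintype V] [Nontrivial V] (G : SimpleGraph V)
    (hG : G.Connected) :
    ∃ f : V → ℝ, IsGreyscale f ∧ ∀ g : V → ℝ, IsGreyscale g → GradLE G f g := by
  classical
  set m := (gradVec G (fun _ => 0)).length with hm
  obtain ⟨f, hf⟩ := (KS_compact_nonempty G m).2
  have hlenf : (gradVec G f).length = m := gradVec_length G f _
  have hfG : IsGreyscale f := KS_subset G (Nat.zero_le m) hf
  refine ⟨f, hfG, fun g hg => ?_⟩
  have hleng : (gradVec G g).length = m := gradVec_length G g _
  refine lex_of_prefix (gradVec G f) (gradVec G g) (by rw [hlenf, hleng]) ?_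
  intro i hpre
  by_cases hi : i < m
  · -- `g` belongs to `KS G i`
    have hgKi : ∀ j, j ≤ i → g ∈ KS G j := by
      intro j
      induction j with
      | zero => intro _; exact hg
      | succ j ihj =>
        intro hji
        have hgj : g ∈ KS G j := ihj (le_of_lt (Nat.lt_of_succ_le hji))
        refine ⟨hgj, fun h hh => ?_⟩
        have hvj : vi G j g = vi G j f := (hpre j (Nat.lt_of_succ_le hji)).symm
        rw [hvj]
        have hfj : f ∈ KS G (j + 1) := KS_subset G (by omega) hf
        exact hfj.2 h hh
    have hfi : f ∈ KS G (i + 1) := KS_subset G (by omega) hf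
    exact hfi.2 g (hgKi i le_rfl)
  · have e1 : (gradVec G f).getD i 0 = 0 :=
      List.getD_eq_default _ _ (by omega)
    have e2 : (gradVec G g).getD i 0 = 0 :=
      List.getD_eq_default _ _ (by omega)
    rw [e1, e2]
end
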